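/- Let c, d > 0 be real numbers such that 0 < c - d < ln(c/d). Then for all λ ∈ [0,1], ln((1-λ) + λc) - ln((1-λ) + λd) ≤ λ(ln c - ln d). -/

import Mathlib

lemma quad_left (e f g x y : ℝ) (h0 : 0 < g) (h1 : e + f + g < 0)
    (hy : 0 ≤ e*y^2 + f*y + g) (hx0 : 0 ≤ x) (hxy : x ≤ y) (hy1 : y ≤ 1) :
    0 ≤ e*x^2 + f*x + g := by
  have hy0 : 0 ≤ y := le_trans hx0 hxy
  rcases le_or_gt e 0 with he | he
  · rcases eq_or_lt_of_le hy0 with h | h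
    · have hx : x = 0 := le_antisymm (h ▸ hxy) hx0
      simp [hx]; nlinarith
    · have key : y*(e*x^2+f*x+g) = (y-x)*g + x*(e*y^2+f*y+g) + e*x*(x-y)*y := by ring
      nlinarith [mul_nonneg (mul_nonneg (mul_nonneg (neg_nonneg.2 he) hx0) (sub_nonneg.2 hxy)) hy0,
        mul_nonneg hx0 hy, mul_nonneg (sub_nonneg.2 hxy) h0.le]
  · by_contra hqx
    push_neg at hqx
    rcases lt_or_eq_of_le hy1 with hy1' | rfl
    · have hx1 : 0 < 1 - x := by linarith
      have key : (1-x)*(e*y^2+f*y+g) = (1-y)*(e*x^2+f*x+g) + (y-x)*(e+f+g) - e*(y-x)*(1-y)*(1-x) := by ring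
      nlinarith [mul_pos (by linarith : (0:ℝ) < 1 - y) (by linarith : (0:ℝ) < -(e*x^2+f*x+g)),
        mul_nonpos_of_nonneg_of_nonpos (sub_nonneg.2 hxy) h1.le,
        mul_nonneg (mul_nonneg (mul_nonneg he.le (sub_nonneg.2 hxy)) (by linarith : (0:ℝ) ≤ 1-y)) hx1.le,
        mul_nonneg hx1.le hy]
    · linarith [hy, h1]

lemma quad_right (e f g x y : ℝ) (h0 : 0 < g) (h1 : e + f + g < 0)
    (hx : e*x^2 + f*x + g ≤ 0) (hx0 : 0 ≤ x) (hxy : x ≤ y) (hy1 : y ≤ 1) :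
    e*y^2 + f*y + g ≤ 0 := by
  have hy0 : 0 ≤ y := le_trans hx0 hxy
  by_contra hqy
  push_neg at hqy
  rcases le_or_gt e 0 with he | he
  · rcases eq_or_lt_of_le hx0 with h | h
    · simp [← h] at hx; linarith
    · have key : y*(e*x^2+f*x+g) = (y-x)*g + x*(e*y^2+f*y+g) + e*x*(x-y)*y := by ring
      nlinarith [mul_pos h hqy, mul_nonneg (sub_nonneg.2 hxy) h0.le,
        mul_nonneg (mul_nonneg (mul_nonneg (neg_nonneg.2 he) hx0) (sub_nonneg.2 hxy)) hy0,
        mul_nonpos_of_nonneg_of_nonpos hy0 hx]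
  · rcases lt_or_eq_of_le (le_trans hxy hy1) with hx1 | rfl
    · have key : (1-x)*(e*y^2+f*y+g) = (1-y)*(e*x^2+f*x+g) + (y-x)*(e+f+g) - e*(y-x)*(1-y)*(1-x) := by ring
      nlinarith [mul_pos (by linarith : (0:ℝ) < 1-x) hqy,
        mul_nonpos_of_nonneg_of_nonpos (by linarith : (0:ℝ) ≤ 1-y) hx,
        mul_nonpos_of_nonneg_of_nonpos (sub_nonneg.2 hxy) h1.le,
        mul_nonneg (mul_nonneg (mul_nonneg he.le (sub_nonneg.2 hxy)) (by linarith : (0:ℝ) ≤ 1-y)) (by linarith : (0:ℝ) ≤ 1-x)]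
    · have : y = 1 := le_antisymm hy1 hxy
      subst this; nlinarith

theorem stmt_1 (c d : ℝ) (hc : 0 < c) (hd : 0 < d) (h1 : 0 < c - d)
    (h2 : c - d < Real.log (c/d)) (l : ℝ) (hl : l ∈ Set.Icc (0:ℝ) 1) :
    Real.log ((1-l) + l*c) - Real.log ((1-l) + l*d) ≤ l * (Real.log c - Real.log d) := by
  obtain ⟨hl0, hl1⟩ := hl
  have hcd : 0 < c / d := div_pos hc hd
  have hlog : Real.log (c/d) = Real.log c - Real.log d := Real.log_div hc.ne' hd.ne'
  set L : ℝ := Real.log c - Real.log d with hLdef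
  have hL : 0 < L := by rw [← hlog]; linarith
  -- key inequality: c*d*L < c - d
  have key : c * d * L < c - d := by
    set u : ℝ := Real.sqrt (c/d) with hu
    have hu0 : 0 < u := Real.sqrt_pos.2 hcd
    have hu2 : u^2 = c/d := Real.sq_sqrt hcd.le
    have hlogu : Real.log u = Real.log (c/d) / 2 := Real.log_sqrt hcd.le
    have hlogu0 : 0 < Real.log u := by rw [hlogu]; linarith
    have hsinh : Real.log u < Real.sinh (Real.log u) := Real.self_lt_sinh_iff.2 hlogu0
    rw [Real.sinh_log hu0] at hsinh
    -- so log(c/d) < u - u⁻¹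
    have hbound : Real.log (c/d) < u - u⁻¹ := by
      rw [hlogu] at hsinh; linarith
    have huinv : u * u⁻¹ = 1 := mul_inv_cancel₀ hu0.ne'
    have hdu2 : d * u^2 = c := by rw [hu2]; field_simp
    have hA : d * u * L < c - d := by
      have := mul_lt_mul_of_pos_left hbound (mul_pos hd hu0)
      rw [hlog] at this
      calc d * u * L < d * u * (u - u⁻¹) := this
        _ = d * u^2 - d * (u * u⁻¹) := by ring
        _ = c - d := by rw [hdu2, huinv]; ring
    have hdu1 : d * u < 1 := by
      have h3 : d * u * L < L := lt_of_lt_of_le hA (by rw [← hlog]; linarith)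
      by_contra hcon
      push_neg at hcon
      nlinarith
    have hdusq : (d*u)^2 = c*d := by
      have : (d*u)^2 = d^2 * u^2 := by ring
      rw [this, hu2]; field_simp
    nlinarith [mul_pos hd hu0, mul_lt_mul_of_pos_left hA (mul_pos hd hu0),
      mul_lt_mul_of_pos_right hdu1 h1]
  -- quadratic coefficients
  set e : ℝ := (c-1)*(d-1)*L with hedef
  set F : ℝ := (c+d-2)*L with hFdef
  set g : ℝ := L - (c-d) with hgdef
  have hg : 0 < g := by rw [hgdef, ← hlog]; linarith
  have hefg : e + F + g < 0 := by rw [hedef, hFdef, hgdef]; nlinarith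
  -- positivity of the affine pieces
  have ha : ∀ x ∈ Set.Icc (0:ℝ) 1, 0 < 1 - x + x*c := by
    intro x hx; rcases hx with ⟨h0, h1'⟩
    rcases le_or_gt c 1 with h | h
    · nlinarith [mul_nonneg (by linarith : (0:ℝ) ≤ 1-x) (by linarith : (0:ℝ) ≤ 1-c)]
    · nlinarith [mul_nonneg h0 (by linarith : (0:ℝ) ≤ c-1)]
  have hb : ∀ x ∈ Set.Icc (0:ℝ) 1, 0 < 1 - x + x*d := by
    intro x hx; rcases hx with ⟨h0, h1'⟩
    rcases le_or_gt d 1 with h | h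
    · nlinarith [mul_nonneg (by linarith : (0:ℝ) ≤ 1-x) (by linarith : (0:ℝ) ≤ 1-d)]
    · nlinarith [mul_nonneg h0 (by linarith : (0:ℝ) ≤ d-1)]
  -- the function and its derivative
  set f : ℝ → ℝ := fun x => x*L - Real.log (1-x+x*c) + Real.log (1-x+x*d) with hfdef
  set f' : ℝ → ℝ := fun x => L - (c-1)/(1-x+x*c) + (d-1)/(1-x+x*d) with hf'def
  have hder : ∀ x ∈ Set.Icc (0:ℝ) 1, HasDerivAt f (f' x) x := by
    intro x hx
    have h1a : HasDerivAt (fun x : ℝ => 1-x+x*c) (-1 + c) x := by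
      have := ((hasDerivAt_id x).const_sub 1).add ((hasDerivAt_id x).mul_const c); simp at this; exact this
    have h1b : HasDerivAt (fun x : ℝ => 1-x+x*d) (-1 + d) x := by
      have := ((hasDerivAt_id x).const_sub 1).add ((hasDerivAt_id x).mul_const d); simp at this; exact this
    have hA := h1a.log (ha x hx).ne'
    have hB := h1b.log (hb x hx).ne'
    have := (((hasDerivAt_id x).mul_const L).sub hA).add hB
    refine this.congr_deriv ?_
    simp [hf'def]; ring
  have hsign : ∀ x ∈ Set.Icc (0:ℝ) 1, f' x = (e*x^2 + F*x + g) / ((1-x+x*c)*(1-x+x*d)) := by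
    intro x hx
    have haa := ha x hx
    have hbb := hb x hx
    rw [hf'def, hedef, hFdef, hgdef]
    rw [eq_div_iff (mul_pos haa hbb).ne']
    simp only []
    rw [add_mul, sub_mul, div_mul_eq_mul_div, div_mul_eq_mul_div, mul_div_assoc (c-1), mul_div_assoc (d-1),
      mul_div_cancel_left₀ _ haa.ne', mul_div_cancel_right₀ _ hbb.ne']
    ring
  have hf0 : f 0 = 0 := by simp [hfdef]
  have hf1 : f 1 = 0 := by
    simp only [hfdef]
    norm_num
    rw [hLdef]; ring
  have hcont : ∀ s ⊆ Set.Icc (0:ℝ) 1, ContinuousOn f s := by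
    intro s hs x hx
    exact ((hder x (hs hx)).continuousAt).continuousWithinAt
  have hgoal : 0 ≤ f l := by
    rcases le_or_gt 0 (e*l^2 + F*l + g) with hql | hql
    · -- f' ≥ 0 on [0, l]
      have hsub : Set.Icc (0:ℝ) l ⊆ Set.Icc (0:ℝ) 1 := Set.Icc_subset_Icc le_rfl hl1
      have hmono : MonotoneOn f (Set.Icc (0:ℝ) l) := by
        apply monotoneOn_of_hasDerivWithinAt_nonneg (convex_Icc 0 l) (hcont _ hsub)
        · intro x hx
          rw [interior_Icc] at hx
          exact (hder x (hsub ⟨hx.1.le, hx.2.le⟩)).hasDerivWithinAt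
        · intro x hx
          rw [interior_Icc] at hx
          have hx' : x ∈ Set.Icc (0:ℝ) 1 := hsub ⟨hx.1.le, hx.2.le⟩
          rw [hsign x hx']
          apply div_nonneg _ (mul_pos (ha x hx') (hb x hx')).le
          exact quad_left e F g x l hg hefg hql hx.1.le hx.2.le hl1
      have := hmono ⟨le_rfl, hl0⟩ ⟨hl0, le_rfl⟩ hl0
      rw [hf0] at this; exact this
    · -- f' ≤ 0 on [l, 1]
      have hsub : Set.Icc l 1 ⊆ Set.Icc (0:ℝ) 1 := Set.Icc_subset_Icc hl0 le_rfl
      have hanti : AntitoneOn f (Set.Icc l 1) := by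
        apply antitoneOn_of_hasDerivWithinAt_nonpos (convex_Icc l 1) (hcont _ hsub)
        · intro x hx
          rw [interior_Icc] at hx
          exact (hder x (hsub ⟨hx.1.le, hx.2.le⟩)).hasDerivWithinAt
        · intro x hx
          rw [interior_Icc] at hx
          have hx' : x ∈ Set.Icc (0:ℝ) 1 := hsub ⟨hx.1.le, hx.2.le⟩
          rw [hsign x hx']
          apply div_nonpos_of_nonpos_of_nonneg _ (mul_pos (ha x hx') (hb x hx')).le
          exact quad_right e F g l x hg hefg hql.le hl0 hx.1.le hx.2.le
      have := hanti ⟨le_rfl, hl1⟩ ⟨hl1, le_rfl⟩ hl1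
      rw [hf1] at this; exact this
  have : f l = l*L - Real.log (1-l+l*c) + Real.log (1-l+l*d) := rfl
  rw [this] at hgoal
  have e1 : (1:ℝ)-l+l*c = (1-l)+l*c := by ring
  have e2 : (1:ℝ)-l+l*d = (1-l)+l*d := by ring
  rw [e1, e2] at hgoal
  linarith
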